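/- If n is even and n ≢ 0 (mod 3), then the cycle C_n admits a J-colouring and its J-colouring number equals 2. -/

import Mathlib

open SimpleGraph

/-- A colouring is proper. -/
def ProperColoring {V : Type*} {k : ℕ} (G : SimpleGraph V) (c : V → Fin k) : Prop :=
  ∀ u v, G.Adj u v → c u ≠ c v

/-- Vertex `v` belongs to a rainbow neighbourhood: its closed neighbourhood
contains every colour. -/
def RainbowAt {V : Type*} {k : ℕ} (G : SimpleGraph V) (c : V → Fin k) (v : V) : Prop :=
  ∀ i : Fin k, ∃ u, (u = v ∨ G.Adj v u) ∧ c u = i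

/-- A J-colouring: a proper colouring in which every vertex belongs to a
rainbow neighbourhood. -/
def IsJColoring {V : Type*} {k : ℕ} (G : SimpleGraph V) (c : V → Fin k) : Prop :=
  ProperColoring G c ∧ ∀ v, RainbowAt G c v

open scoped Fin.NatCast Fin.CommRing

lemma fin3_exists : ∀ a b : Fin 3, ∃ i : Fin 3, i ≠ a ∧ i ≠ b := by decide

theorem J_number_cycle_two (n : ℕ) (hn : 3 ≤ n) (h2 : n % 2 = 0) (h3 : n % 3 ≠ 0) :
    (∃ c : Fin n → Fin 2, IsJColoring (cycleGraph n) c) ∧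
      ∀ k : ℕ, 2 < k → ¬ ∃ c : Fin n → Fin k, IsJColoring (cycleGraph n) c := by
  classical
  obtain ⟨m, rfl⟩ : ∃ m, n = m + 1 + 2 := ⟨n - 3, by omega⟩
  have hadj : ∀ u v : Fin (m + 1 + 2), (cycleGraph (m + 1 + 2)).Adj u v ↔
      v = u - 1 ∨ v = u + 1 := by
    intro u v
    rw [cycleGraph_adj]
    constructor
    · rintro (h | h)
      · left; rw [← h]; ring
      · right; rw [← h]; ring
    · rintro (rfl | rfl)
      · left; ring
      · right; ring
  constructor
  · -- existence of a 2-J-colouring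
    have h2' : 2 ∣ (m + 1 + 2) := Nat.dvd_of_mod_eq_zero h2
    have hvne : ∀ w : Fin (m + 1 + 2), (w + 1).val % 2 ≠ w.val % 2 := by
      intro w h
      simp only [Fin.add_def, Fin.val_one] at h
      rw [Nat.mod_mod_of_dvd _ h2'] at h
      omega
    refine ⟨fun v => ⟨v.val % 2, by omega⟩, ?_, ?_⟩
    · intro u v hA
      rcases (hadj u v).1 hA with rfl | rfl
      · intro h
        have h' : u.val % 2 = (u - 1).val % 2 := by simpa using congrArg Fin.val h
        apply hvne (u - 1)
        rw [show u - 1 + 1 = u by ring]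
        exact h'
      · intro h
        exact hvne u (by simpa using (congrArg Fin.val h).symm)
    · intro v i
      by_cases hi : i = ⟨v.val % 2, by omega⟩
      · exact ⟨v, Or.inl rfl, hi.symm⟩
      · refine ⟨v + 1, Or.inr ((hadj v (v + 1)).2 (Or.inr rfl)), ?_⟩
        have h1 := hvne v
        have hiv : i.val ≠ v.val % 2 := by
          intro h
          exact hi (Fin.ext (by simpa using h))
        have hlt : i.val < 2 := i.isLt
        apply Fin.ext
        show (v + 1).val % 2 = i.val
        omega
  · -- no J-colouring with more than 2 colours
    rintro k hk ⟨c, hp, hr⟩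
    -- first, k ≤ 3
    have hk3 : k ≤ 3 := by
      have hsub : ∀ i : Fin k, ∃ u ∈ ({(0 : Fin (m + 1 + 2)) - 1, 0, 0 + 1} :
          Finset (Fin (m + 1 + 2))), c u = i := by
        intro i
        obtain ⟨u, hu, hcu⟩ := hr 0 i
        refine ⟨u, ?_, hcu⟩
        rcases hu with rfl | hA
        · simp
        · rcases (hadj _ _).1 hA with rfl | rfl <;> simp
      choose g hg hgc using hsub
      have hinj : Set.InjOn g (Finset.univ : Finset (Fin k)) := by
        intro i _ j _ hij
        rw [← hgc i, ← hgc j, hij]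
      have hcard := Finset.card_le_card_of_injOn g (fun i _ => hg i) hinj
      have h1 := Finset.card_insert_le ((0 : Fin (m + 1 + 2)) - 1)
        ({0, 0 + 1} : Finset (Fin (m + 1 + 2)))
      have h2c := Finset.card_insert_le (0 : Fin (m + 1 + 2))
        ({0 + 1} : Finset (Fin (m + 1 + 2)))
      have h3c : ({(0 : Fin (m + 1 + 2)) + 1} : Finset (Fin (m + 1 + 2))).card = 1 :=
        Finset.card_singleton _
      have huniv : (Finset.univ : Finset (Fin k)).card = k := by simp
      omega
    obtain rfl : k = 3 := by omega
    -- window argument: c (v + 2) = c (v - 1)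
    have key : ∀ v : Fin (m + 1 + 2), c (v + 2) = c (v - 1) := by
      intro v
      obtain ⟨i, hi1, hi2⟩ := fin3_exists (c v) (c (v + 1))
      have hc2 : c (v + 2) = i := by
        obtain ⟨u, hu, hcu⟩ := hr (v + 1) i
        rcases hu with rfl | hA
        · exact absurd hcu.symm hi2
        · rcases (hadj _ _).1 hA with rfl | rfl
          · rw [show v + 1 - 1 = v by ring] at hcu
            exact absurd hcu.symm hi1
          · rw [show v + 1 + 1 = v + 2 by ring] at hcu
            exact hcu
      have hc1 : c (v - 1) = i := by
        obtain ⟨u, hu, hcu⟩ := hr v i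
        rcases hu with rfl | hA
        · exact absurd hcu.symm hi1
        · rcases (hadj _ _).1 hA with rfl | rfl
          · exact hcu
          · exact absurd hcu.symm hi2
      rw [hc2, hc1]
    have per : ∀ v : Fin (m + 1 + 2), c (v + 3) = c v := by
      intro v
      have h1 := key (v + 1)
      rw [show v + 1 + 2 = v + 3 by ring, show v + 1 - 1 = v by ring] at h1
      exact h1
    have perN : ∀ (t : ℕ) (v : Fin (m + 1 + 2)), c (v + (3 * t : ℕ)) = c v := by
      intro t
      induction t with
      | zero => intro v; simp
      | succ t ih =>
        intro v
        have e : ((3 * (t + 1) : ℕ) : Fin (m + 1 + 2)) =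
            ((3 * t : ℕ) : Fin (m + 1 + 2)) + 3 := by push_cast; ring
        rw [e, ← add_assoc]
        rw [per (v + ((3 * t : ℕ) : Fin (m + 1 + 2)))]
        exact ih v
    -- coprimality gives a multiplicative inverse of 3
    have hcop : Nat.Coprime 3 (m + 1 + 2) :=
      Nat.prime_three.coprime_iff_not_dvd.mpr (by omega)
    obtain ⟨t, -, ht⟩ := Nat.exists_mul_mod_eq_one_of_coprime hcop (by omega)
    have hone : ((3 * t : ℕ) : Fin (m + 1 + 2)) = 1 := by
      apply Fin.ext
      rw [Fin.val_natCast, ht, Fin.val_one]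
    have hcontra : c (0 + 1) = c 0 := by
      rw [← hone]; exact perN t 0
    exact hp 0 (0 + 1) ((hadj 0 (0 + 1)).2 (Or.inr rfl)) hcontra.symm
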